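/- Let E be the channel E(X) = Σ_{k=0}^{2n} C(2n,k)^{−1} q_k Σ_{|α|=k} γ_α X γ_α†, where (q_k) is a probability distribution. Then each Majorana monomial γ_β is an eigenvector of E with eigenvalue ξ_{|β|}, where ξ_j = Σ_{k=0}^{2n} (−1)^{jk} e_k(−1,…,−1,1,…,1) C(2n,k)^{−1} q_k (with j copies of −1 and 2n−j copies of +1 in the argument of e_k). -/

import Mathlib

open Finset

/-- The Majorana monomial `γ_α`: the product of the `γ μ` for `μ ∈ α` in ascending order. -/
def majoranaMonomial {n : ℕ} {A : Type*} [Ring A] (γ : Fin n → A) (α : Finset (Fin n)) : A :=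
  ((α.sort (· ≤ ·)).map γ).prod

section Aux

variable {n : ℕ} {A : Type*} [Ring A] [StarRing A] [Algebra ℝ A]
  (γ : Fin (2 * n) → A)

set_option linter.unusedSectionVars false

lemma neg_one_pow_congr' {a b : ℕ} (h : a % 2 = b % 2) : (-1 : ℝ) ^ a = (-1) ^ b := by
  rw [← Nat.div_add_mod a 2, ← Nat.div_add_mod b 2, pow_add, pow_add, pow_mul, pow_mul]
  simp [h]

lemma maj_sq_one (hCAR : ∀ μ ν, γ μ * γ ν + γ ν * γ μ = if μ = ν then (2 : A) else 0) (μ : Fin (2 * n)) : γ μ * γ μ = 1 := by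
  have h := hCAR μ μ
  simp only [if_pos rfl] at h
  have h2 : (2 : ℝ) • (γ μ * γ μ) = (2 : ℝ) • (1 : A) := by
    rw [two_smul, two_smul, h]
    norm_num
  calc γ μ * γ μ = ((2 : ℝ)⁻¹ * 2) • (γ μ * γ μ) := by norm_num
    _ = (2 : ℝ)⁻¹ • ((2 : ℝ) • (γ μ * γ μ)) := by rw [mul_smul]
    _ = (2 : ℝ)⁻¹ • ((2 : ℝ) • (1 : A)) := by rw [h2]
    _ = 1 := by rw [← mul_smul]; norm_num

lemma maj_swap (hCAR : ∀ μ ν, γ μ * γ ν + γ ν * γ μ = if μ = ν then (2 : A) else 0) (μ ν : Fin (2 * n)) :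
    γ μ * γ ν = (if ν = μ then (1 : ℝ) else -1) • (γ ν * γ μ) := by
  by_cases h : ν = μ
  · simp [h]
  · have h' := hCAR μ ν
    rw [if_neg (fun hh => h hh.symm)] at h'
    have h2 : γ μ * γ ν = -(γ ν * γ μ) := eq_neg_of_add_eq_zero_left h'
    simp [h, h2]

lemma maj_move (hCAR : ∀ μ ν, γ μ * γ ν + γ ν * γ μ = if μ = ν then (2 : A) else 0) (μ : Fin (2 * n)) (l : List (Fin (2 * n))) :
    γ μ * (l.map γ).prod =
      ((-1 : ℝ) ^ (l.countP (fun ν => decide (ν ≠ μ)))) • ((l.map γ).prod * γ μ) := by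
  induction l with
  | nil => simp
  | cons ν t ih =>
    have hc : (ν :: t).countP (fun ν => decide (ν ≠ μ))
        = (if ν = μ then 0 else 1) + t.countP (fun ν => decide (ν ≠ μ)) := by
      rw [List.countP_cons]
      by_cases h : ν = μ <;> simp [h, Nat.add_comm]
    rw [List.map_cons, List.prod_cons, ← mul_assoc, maj_swap γ hCAR μ ν, smul_mul_assoc,
      mul_assoc, ih, mul_smul_comm, ← mul_assoc, smul_smul, hc, pow_add]
    by_cases h : ν = μ <;> simp [h]

lemma maj_conj_single (hCAR : ∀ μ ν, γ μ * γ ν + γ ν * γ μ = if μ = ν then (2 : A) else 0) (μ : Fin (2 * n)) (l : List (Fin (2 * n))) :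
    γ μ * (l.map γ).prod * γ μ =
      ((-1 : ℝ) ^ (l.countP (fun ν => decide (ν ≠ μ)))) • (l.map γ).prod := by
  rw [maj_move γ hCAR, smul_mul_assoc, mul_assoc, maj_sq_one γ hCAR, mul_one]

lemma countP_sort (β : Finset (Fin (2 * n))) (p : Fin (2 * n) → Prop) [DecidablePred p] :
    (β.sort (· ≤ ·)).countP (fun x => decide (p x)) = (β.filter p).card := by
  rw [List.Perm.countP_eq _ (Finset.sort_perm_toList (s := β) (r := fun x1 x2 => x1 ≤ x2))]
  have h1 : β.toList.countP (fun x => decide (p x)) = Multiset.countP p β.val := by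
    rw [← Multiset.coe_countP]
    exact congrArg (Multiset.countP p) (Multiset.coe_toList β.val)
  rw [h1, Multiset.countP_eq_card_filter]
  rfl

lemma maj_conj_gamma (hCAR : ∀ μ ν, γ μ * γ ν + γ ν * γ μ = if μ = ν then (2 : A) else 0) (μ : Fin (2 * n)) (β : Finset (Fin (2 * n))) :
    γ μ * majoranaMonomial γ β * γ μ =
      ((-1 : ℝ) ^ (β.card + (if μ ∈ β then 1 else 0))) • majoranaMonomial γ β := by
  rw [majoranaMonomial, maj_conj_single γ hCAR, countP_sort]
  congr 1
  apply neg_one_pow_congr'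
  have h1 : β.filter (fun x => x ≠ μ) = β.erase μ := Finset.filter_ne' β μ
  rw [h1]
  by_cases h : μ ∈ β
  · rw [Finset.card_erase_of_mem h, if_pos h]
    have : 1 ≤ β.card := Finset.card_pos.mpr ⟨μ, h⟩
    omega
  · rw [Finset.erase_eq_of_notMem h, if_neg h]
    omega

lemma star_list_prod (hsa : ∀ μ, star (γ μ) = γ μ) (l : List (Fin (2 * n))) :
    star ((l.map γ).prod) = (l.reverse.map γ).prod := by
  induction l with
  | nil => simp
  | cons ν t ih => simp [star_mul, ih, hsa]

lemma maj_conj_list (hCAR : ∀ μ ν, γ μ * γ ν + γ ν * γ μ = if μ = ν then (2 : A) else 0) (hsa : ∀ μ, star (γ μ) = γ μ)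
    (l : List (Fin (2 * n))) (β : Finset (Fin (2 * n))) :
    (l.map γ).prod * majoranaMonomial γ β * star ((l.map γ).prod) =
      ((-1 : ℝ) ^ (l.length * β.card + l.countP (fun ν => decide (ν ∈ β)))) •
        majoranaMonomial γ β := by
  induction l with
  | nil => simp
  | cons μ t ih =>
    rw [star_list_prod γ hsa] at ih ⊢
    rw [List.map_cons, List.prod_cons, List.reverse_cons, List.map_append, List.prod_append]
    simp only [List.map_cons, List.map_nil, List.prod_cons, List.prod_nil, mul_one]
    have key : γ μ * (majoranaMonomial γ β) * γ μ =
        ((-1 : ℝ) ^ (β.card + (if μ ∈ β then 1 else 0))) • majoranaMonomial γ β :=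
      maj_conj_gamma γ hCAR μ β
    calc γ μ * (List.map γ t).prod * majoranaMonomial γ β *
          ((List.map γ t.reverse).prod * γ μ)
        = γ μ * ((List.map γ t).prod * majoranaMonomial γ β *
            (List.map γ t.reverse).prod) * γ μ := by
          simp only [mul_assoc]
      _ = γ μ * (((-1 : ℝ) ^ (t.length * β.card + t.countP (fun ν => decide (ν ∈ β)))) •
            majoranaMonomial γ β) * γ μ := by rw [ih]
      _ = ((-1 : ℝ) ^ (t.length * β.card + t.countP (fun ν => decide (ν ∈ β)))) •
            (γ μ * majoranaMonomial γ β * γ μ) := by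
          rw [mul_smul_comm, smul_mul_assoc]
      _ = ((-1 : ℝ) ^ (t.length * β.card + t.countP (fun ν => decide (ν ∈ β)))) •
            (((-1 : ℝ) ^ (β.card + (if μ ∈ β then 1 else 0))) • majoranaMonomial γ β) := by
          rw [key]
      _ = ((-1 : ℝ) ^ ((μ :: t).length * β.card +
            (μ :: t).countP (fun ν => decide (ν ∈ β)))) • majoranaMonomial γ β := by
          rw [smul_smul, ← pow_add]
          congr 1
          rw [List.countP_cons, List.length_cons]
          by_cases h : μ ∈ β <;> simp [h] <;> ring

lemma maj_conj (hCAR : ∀ μ ν, γ μ * γ ν + γ ν * γ μ = if μ = ν then (2 : A) else 0) (hsa : ∀ μ, star (γ μ) = γ μ) (α β : Finset (Fin (2 * n))) :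
    majoranaMonomial γ α * majoranaMonomial γ β * star (majoranaMonomial γ α) =
      ((-1 : ℝ) ^ (α.card * β.card + (α ∩ β).card)) • majoranaMonomial γ β := by
  have := maj_conj_list γ hCAR hsa (α.sort (· ≤ ·)) β
  rw [show ((α.sort (· ≤ ·)).map γ).prod = majoranaMonomial γ α from rfl] at this
  rw [this, Finset.length_sort, countP_sort, Finset.filter_mem_eq_inter]

lemma esymm_eq (β : Finset (Fin (2 * n))) (k : ℕ) :
    Multiset.esymm
        (Multiset.replicate β.card (-1 : ℝ) + Multiset.replicate (2 * n - β.card) 1) k =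
      ∑ α ∈ univ.filter (fun α : Finset (Fin (2 * n)) => α.card = k),
        (-1 : ℝ) ^ ((α ∩ β).card) := by
  have hm : Multiset.replicate β.card (-1 : ℝ) + Multiset.replicate (2 * n - β.card) 1 =
      (univ : Finset (Fin (2 * n))).val.map (fun μ => if μ ∈ β then (-1 : ℝ) else 1) := by
    have hu : (β.disjUnion βᶜ disjoint_compl_right) = (univ : Finset (Fin (2 * n))) := by
      ext x; simp [Finset.mem_disjUnion, em]
    have hval : (β.disjUnion βᶜ disjoint_compl_right).val = β.val + βᶜ.val := rfl
    rw [← hu, hval, Multiset.map_add]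
    congr 1
    · rw [show Multiset.replicate β.card (-1 : ℝ) = β.val.map (fun _ => (-1 : ℝ)) by
        rw [Multiset.map_const']; rfl]
      apply Multiset.map_congr rfl
      intro x hx
      simp [Finset.mem_def.mpr hx]
    · rw [show (2 * n - β.card) = βᶜ.card by rw [Finset.card_compl]; simp]
      rw [show Multiset.replicate βᶜ.card (1 : ℝ) = βᶜ.val.map (fun _ => (1 : ℝ)) by
        rw [Multiset.map_const']; rfl]
      apply Multiset.map_congr rfl
      intro x hx
      have : x ∉ β := by simpa using (Finset.mem_def.mpr hx : x ∈ βᶜ)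
      simp [this]
  rw [hm, Finset.esymm_map_val]
  have hp : (univ : Finset (Fin (2 * n))).powersetCard k =
      univ.filter (fun α : Finset (Fin (2 * n)) => α.card = k) := by
    rw [Finset.powersetCard_eq_filter, Finset.powerset_univ]
  rw [hp]
  apply Finset.sum_congr rfl
  intro α _
  rw [Finset.prod_ite (f := fun _ => (-1 : ℝ)) (g := fun _ => (1 : ℝ))]
  simp [Finset.prod_const, Finset.filter_mem_eq_inter]

end Aux

theorem flo_twirled_channel_eigenvalues {n : ℕ} {A : Type*} [Ring A] [StarRing A] [Algebra ℝ A]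
    (γ : Fin (2 * n) → A)
    (hCAR : ∀ μ ν, γ μ * γ ν + γ ν * γ μ = if μ = ν then (2 : A) else 0)
    (hsa : ∀ μ, star (γ μ) = γ μ)
    (q : ℕ → ℝ) (hq : ∀ k, 0 ≤ q k) (hqsum : ∑ k ∈ Finset.range (2 * n + 1), q k = 1)
    (E : A → A)
    (hE : ∀ X, E X = ∑ k ∈ Finset.range (2 * n + 1),
        (((Nat.choose (2 * n) k : ℝ))⁻¹ * q k) •
          ∑ α ∈ univ.filter (fun α : Finset (Fin (2 * n)) => α.card = k),
            majoranaMonomial γ α * X * star (majoranaMonomial γ α))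
    (β : Finset (Fin (2 * n))) :
    E (majoranaMonomial γ β)
      = (∑ k ∈ Finset.range (2 * n + 1),
          (-1 : ℝ) ^ (β.card * k) *
            Multiset.esymm
              (Multiset.replicate β.card (-1 : ℝ) + Multiset.replicate (2 * n - β.card) 1) k *
            ((Nat.choose (2 * n) k : ℝ))⁻¹ * q k) • majoranaMonomial γ β := by
  rw [hE, Finset.sum_smul]
  apply Finset.sum_congr rfl
  intro k _
  have hinner : ∑ α ∈ univ.filter (fun α : Finset (Fin (2 * n)) => α.card = k),
      majoranaMonomial γ α * majoranaMonomial γ β * star (majoranaMonomial γ α) =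
      ((-1 : ℝ) ^ (β.card * k) *
        Multiset.esymm
          (Multiset.replicate β.card (-1 : ℝ) + Multiset.replicate (2 * n - β.card) 1) k) •
        majoranaMonomial γ β := by
    rw [esymm_eq, Finset.mul_sum, Finset.sum_smul]
    apply Finset.sum_congr rfl
    intro α hα
    rw [maj_conj γ hCAR hsa α β]
    have hk : α.card = k := (Finset.mem_filter.mp hα).2
    rw [hk, Nat.mul_comm k, pow_add]
  rw [hinner, smul_smul]
  congr 1
  ring
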